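/- Almost additivity of the rough integrand (Lemma on the rough integral): Let 2 < p < 3, let ω be a superadditive nonnegative function on {0 ≤ s ≤ t ≤ 1}, and let X : {0 ≤ s ≤ t ≤ 1} → ℝ^d and 𝕏 : {0 ≤ s ≤ t ≤ 1} → ℝ^d ⊗ ℝ^d satisfy Chen's relations, with |X_{st}| ≤ ω(s,t)^{1/p} and |𝕏_{st}| ≤ ω(s,t)^{2/p} for all s ≤ t. Let a : [0,1] → L(ℝ^d, ℝⁿ) and a′ : [0,1] → L(ℝ^d ⊗ ℝ^d, ℝⁿ) be such that |a′_t − a′_s| ≤ ω(s,t)^{1/p} and |a_t − a_s − a′_s(X_{st} ⊗ ·)| ≤ ω(s,t)^{2/p} for all s ≤ t, in the sense that the linear map v ↦ a_t v − a_s v − a′_s(X_{st} ⊗ v) has operator norm at most ω(s,t)^{2/p}. Define μ_{ts} = a_s X_{st} + a′_s(𝕏_{st}) ∈ ℝⁿ. Then for all 0 ≤ s ≤ u ≤ t ≤ 1: |μ_{ts} − (μ_{tu} + μ_{us})| ≤ 2 ω(s,t)^{3/p}. -/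
import Mathlib


/-- **Almost additivity of the rough integrand.** Let `2 < p < 3`, `ω` a superadditive
nonnegative function, `(X, 𝕏)` satisfying Chen's relations with the bounds
`|X_{st}| ≤ ω(s,t)^{1/p}` and `|𝕏_{st}| ≤ ω(s,t)^{2/p}`, and `(a, a')` a path controlled by `X`
with `|a'_t - a'_s| ≤ ω(s,t)^{1/p}` and remainder of operator norm at most `ω(s,t)^{2/p}`.
Then `μ_{ts} = a_s X_{st} + a'_s 𝕏_{st}` satisfies
`|μ_{ts} - (μ_{tu} + μ_{us})| ≤ 2 ω(s,t)^{3/p}`. -/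
theorem rough_integrand_almost_additive
    (p : ℝ) (hp1 : 2 < p) (hp2 : p < 3) (d n : ℕ)
    (ω : ℝ → ℝ → ℝ)
    (hω_nonneg : ∀ s t : ℝ, 0 ≤ s → s ≤ t → t ≤ 1 → 0 ≤ ω s t)
    (hω_super : ∀ s u t : ℝ, 0 ≤ s → s ≤ u → u ≤ t → t ≤ 1 → ω s u + ω u t ≤ ω s t)
    (X : ℝ → ℝ → (Fin d → ℝ)) (XX : ℝ → ℝ → (Fin d → Fin d → ℝ))
    (hChen1 : ∀ s u t : ℝ, 0 ≤ s → s ≤ u → u ≤ t → t ≤ 1 → X s t = X s u + X u t)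
    (hChen2 : ∀ s u t : ℝ, 0 ≤ s → s ≤ u → u ≤ t → t ≤ 1 →
      XX s t = XX s u + XX u t + (fun i j => X s u i * X u t j))
    (hXb : ∀ s t : ℝ, 0 ≤ s → s ≤ t → t ≤ 1 → ‖X s t‖ ≤ ω s t ^ (1 / p))
    (hXXb : ∀ s t : ℝ, 0 ≤ s → s ≤ t → t ≤ 1 → ‖XX s t‖ ≤ ω s t ^ (2 / p))
    (a : ℝ → (Fin d → ℝ) →L[ℝ] (Fin n → ℝ))
    (a' : ℝ → (Fin d → Fin d → ℝ) →L[ℝ] (Fin n → ℝ))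
    (ha' : ∀ s t : ℝ, 0 ≤ s → s ≤ t → t ≤ 1 → ‖a' t - a' s‖ ≤ ω s t ^ (1 / p))
    (hRa : ∀ s t : ℝ, 0 ≤ s → s ≤ t → t ≤ 1 → ∀ v : Fin d → ℝ,
      ‖a t v - a s v - a' s (fun i j => X s t i * v j)‖ ≤ ω s t ^ (2 / p) * ‖v‖) :
    ∀ s u t : ℝ, 0 ≤ s → s ≤ u → u ≤ t → t ≤ 1 →
      ‖(a s (X s t) + a' s (XX s t)) -
          ((a u (X u t) + a' u (XX u t)) + (a s (X s u) + a' s (XX s u)))‖ ≤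
        2 * ω s t ^ (3 / p) := by
  intro s u t hs hsu hut ht1
  have hsut : s ≤ t := hsu.trans hut
  have hu0 : 0 ≤ u := hs.trans hsu
  have hu1 : u ≤ 1 := hut.trans ht1
  have hωst : 0 ≤ ω s t := hω_nonneg s t hs hsut ht1
  have hωsu : 0 ≤ ω s u := hω_nonneg s u hs hsu hu1
  have hωut : 0 ≤ ω u t := hω_nonneg u t hu0 hut ht1
  have hsuper := hω_super s u t hs hsu hut ht1
  have h1 : ω s u ≤ ω s t := by linarith
  have h2 : ω u t ≤ ω s t := by linarith
  have hp0 : 0 < p := by linarith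
  have key : (a s (X s t) + a' s (XX s t)) -
      ((a u (X u t) + a' u (XX u t)) + (a s (X s u) + a' s (XX s u))) =
      -(a u (X u t) - a s (X u t) - a' s (fun i j => X s u i * X u t j))
        - (a' u - a' s) (XX u t) := by
    rw [hChen1 s u t hs hsu hut ht1, hChen2 s u t hs hsu hut ht1]
    simp only [map_add, ContinuousLinearMap.sub_apply]
    abel
  rw [key]
  have b1 : ‖a u (X u t) - a s (X u t) - a' s (fun i j => X s u i * X u t j)‖
      ≤ ω s u ^ (2 / p) * ‖X u t‖ := hRa s u hs hsu hu1 (X u t)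
  have b2 : ‖(a' u - a' s) (XX u t)‖ ≤ ‖a' u - a' s‖ * ‖XX u t‖ :=
    (a' u - a' s).le_opNorm _
  have bXut : ‖X u t‖ ≤ ω u t ^ (1 / p) := hXb u t hu0 hut ht1
  have bXXut : ‖XX u t‖ ≤ ω u t ^ (2 / p) := hXXb u t hu0 hut ht1
  have ba' : ‖a' u - a' s‖ ≤ ω s u ^ (1 / p) := ha' s u hs hsu hu1
  have m1 : ω s u ^ (2 / p) * ω u t ^ (1 / p) ≤ ω s t ^ (3 / p) := by
    calc ω s u ^ (2 / p) * ω u t ^ (1 / p)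
        ≤ ω s t ^ (2 / p) * ω s t ^ (1 / p) := by
          apply mul_le_mul (Real.rpow_le_rpow hωsu h1 (by positivity))
            (Real.rpow_le_rpow hωut h2 (by positivity)) (by positivity) (by positivity)
      _ = ω s t ^ (3 / p) := by
          rw [show (3 / p : ℝ) = 2 / p + 1 / p by ring,
            Real.rpow_add' hωst (by positivity)]
  have m2 : ω s u ^ (1 / p) * ω u t ^ (2 / p) ≤ ω s t ^ (3 / p) := by
    calc ω s u ^ (1 / p) * ω u t ^ (2 / p)
        ≤ ω s t ^ (1 / p) * ω s t ^ (2 / p) := by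
          apply mul_le_mul (Real.rpow_le_rpow hωsu h1 (by positivity))
            (Real.rpow_le_rpow hωut h2 (by positivity)) (by positivity) (by positivity)
      _ = ω s t ^ (3 / p) := by
          rw [show (3 / p : ℝ) = 1 / p + 2 / p by ring,
            Real.rpow_add' hωst (by positivity)]
  calc ‖-(a u (X u t) - a s (X u t) - a' s (fun i j => X s u i * X u t j))
        - (a' u - a' s) (XX u t)‖
      ≤ ‖-(a u (X u t) - a s (X u t) - a' s (fun i j => X s u i * X u t j))‖
        + ‖(a' u - a' s) (XX u t)‖ := norm_sub_le _ _
    _ ≤ ω s u ^ (2 / p) * ω u t ^ (1 / p) + ω s u ^ (1 / p) * ω u t ^ (2 / p) := by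
        rw [norm_neg]
        refine add_le_add ?_ ?_
        · exact b1.trans (mul_le_mul_of_nonneg_left bXut (by positivity))
        · exact b2.trans (mul_le_mul ba' bXXut (norm_nonneg _) (by positivity))
    _ ≤ ω s t ^ (3 / p) + ω s t ^ (3 / p) := add_le_add m1 m2
    _ = 2 * ω s t ^ (3 / p) := by ring
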